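/- The kernel R(t,s) = ½(t^α + s^α − |t−s|^α) is positive semi-definite on [0,∞) × [0,∞) for every 0 < α < 2: for all n, all t_1,…,t_n ≥ 0 and all real c_1,…,c_n, ∑_{j,k} c_j c_k R(t_j, t_k) ≥ 0. -/

import Mathlib

open Finset

open MeasureTheory Set

/-- Auxiliary kernel `F α x u = (1 - cos (x u)) u ^ (-(α+1))`. -/
noncomputable def fbmF (α x u : ℝ) : ℝ := (1 - Real.cos (x * u)) * u ^ (-(α + 1))

lemma fbmF_def (α x u : ℝ) : fbmF α x u = (1 - Real.cos (x * u)) * u ^ (-(α + 1)) := rfl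

lemma one_sub_cos_nonneg (y : ℝ) : 0 ≤ 1 - Real.cos y := by
  have := Real.cos_le_one y; linarith

lemma fbmF_nonneg (α x : ℝ) {u : ℝ} (hu : 0 < u) : 0 ≤ fbmF α x u :=
  mul_nonneg (one_sub_cos_nonneg _) (Real.rpow_nonneg hu.le _)

lemma one_sub_cos_le_half_sq (y : ℝ) : 1 - Real.cos y ≤ y ^ 2 / 2 := by
  have h2 : (2:ℝ) * (y / 2) = y := by ring
  have hc := Real.cos_two_mul (y / 2)
  rw [h2] at hc
  have hs : |Real.sin (y / 2)| ≤ |y / 2| := Real.abs_sin_le_abs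
  have hsq : Real.sin (y / 2) ^ 2 ≤ (y / 2) ^ 2 := by
    rw [← sq_abs, ← sq_abs (y / 2)]
    exact pow_le_pow_left₀ (abs_nonneg _) hs 2
  nlinarith [Real.sin_sq_add_cos_sq (y / 2)]

lemma fbmF_contOn (α x : ℝ) : ContinuousOn (fbmF α x) (Ioi (0:ℝ)) := by
  apply ContinuousOn.mul
  · exact ((continuous_const.sub (Real.continuous_cos.comp
      (continuous_const.mul continuous_id))).continuousOn)
  · intro u hu
    exact (Real.continuousAt_rpow_const u _ (Or.inl (ne_of_gt hu))).continuousWithinAt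

lemma fbmF_integrable {α : ℝ} (hα₀ : 0 < α) (hα₂ : α < 2) (x : ℝ) :
    IntegrableOn (fbmF α x) (Ioi (0:ℝ)) := by
  have hIoc : IntegrableOn (fbmF α x) (Ioc (0:ℝ) 1) := by
    have hg : IntegrableOn (fun u : ℝ => x ^ 2 / 2 * u ^ (1 - α)) (Ioc (0:ℝ) 1) := by
      have : IntervalIntegrable (fun u : ℝ => u ^ (1 - α)) volume 0 1 :=
        intervalIntegral.intervalIntegrable_rpow' (by linarith)
      exact ((intervalIntegrable_iff_integrableOn_Ioc_of_le zero_le_one).1 this).const_mul _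
    apply Integrable.mono' hg
    · exact ((fbmF_contOn α x).mono Ioc_subset_Ioi_self).aestronglyMeasurable measurableSet_Ioc
    · filter_upwards [ae_restrict_mem measurableSet_Ioc] with u hu
      have hu0 : 0 < u := hu.1
      rw [Real.norm_of_nonneg (fbmF_nonneg α x hu0), fbmF_def]
      have h1 : 1 - Real.cos (x * u) ≤ (x * u) ^ 2 / 2 := one_sub_cos_le_half_sq _
      have h2 : (0:ℝ) ≤ u ^ (-(α + 1)) := Real.rpow_nonneg hu0.le _
      have h3 : u ^ (2:ℝ) * u ^ (-(α + 1)) = u ^ (1 - α) := by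
        rw [← Real.rpow_add hu0]; ring_nf
      have h4 : u ^ 2 * u ^ (-(α + 1)) = u ^ (1 - α) := by
        rw [← h3, ← Real.rpow_natCast u 2]; norm_num
      calc (1 - Real.cos (x * u)) * u ^ (-(α + 1))
          ≤ (x * u) ^ 2 / 2 * u ^ (-(α + 1)) := mul_le_mul_of_nonneg_right h1 h2
        _ = x ^ 2 / 2 * (u ^ 2 * u ^ (-(α + 1))) := by ring
        _ = x ^ 2 / 2 * u ^ (1 - α) := by rw [h4]
  have hIoi : IntegrableOn (fbmF α x) (Ioi (1:ℝ)) := by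
    have hg : IntegrableOn (fun u : ℝ => 2 * u ^ (-(α + 1))) (Ioi (1:ℝ)) :=
      (integrableOn_Ioi_rpow_of_lt (by linarith) one_pos).const_mul _
    apply Integrable.mono' hg
    · exact ((fbmF_contOn α x).mono (fun u (hu : u ∈ Ioi (1:ℝ)) => Set.mem_Ioi.2 (lt_trans one_pos (Set.mem_Ioi.1 hu)))).aestronglyMeasurable
        measurableSet_Ioi
    · filter_upwards [ae_restrict_mem measurableSet_Ioi] with u hu
      have hu0 : (0:ℝ) < u := lt_trans one_pos hu
      rw [Real.norm_of_nonneg (fbmF_nonneg α x hu0), fbmF_def]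
      have h2 : (0:ℝ) ≤ u ^ (-(α + 1)) := Real.rpow_nonneg hu0.le _
      have h1 : 1 - Real.cos (x * u) ≤ 2 := by
        have := Real.neg_one_le_cos (x * u); linarith
      exact mul_le_mul_of_nonneg_right h1 h2
  have hunion : IntegrableOn (fbmF α x) (Ioc (0:ℝ) 1 ∪ Ioi 1) := hIoc.union hIoi
  rwa [Ioc_union_Ioi_eq_Ioi zero_le_one] at hunion

lemma fbmF_scaling_pos {α : ℝ} (x : ℝ) (hx : 0 < x) :
    ∫ u in Ioi (0:ℝ), fbmF α x u = x ^ α * ∫ u in Ioi (0:ℝ), fbmF α 1 u := by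
  have hx' : x ≠ 0 := ne_of_gt hx
  have key := integral_comp_mul_left_Ioi
    (fun v : ℝ => (1 - Real.cos v) * (v * x⁻¹) ^ (-(α + 1))) 0 hx
  have hL : (∫ u in Ioi (0:ℝ), (1 - Real.cos (x * u)) * (x * u * x⁻¹) ^ (-(α + 1)))
      = ∫ u in Ioi (0:ℝ), fbmF α x u := by
    congr 1; ext u
    rw [fbmF_def]
    congr 2
    field_simp
  rw [hL] at key
  rw [key, mul_zero]
  have hR : (∫ v in Ioi (0:ℝ), (1 - Real.cos v) * (v * x⁻¹) ^ (-(α + 1)))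
      = (x⁻¹) ^ (-(α + 1)) * ∫ v in Ioi (0:ℝ), fbmF α 1 v := by
    rw [← integral_const_mul]
    apply setIntegral_congr_fun measurableSet_Ioi
    intro v hv
    simp only [fbmF_def, one_mul]
    rw [Real.mul_rpow (le_of_lt hv) (inv_nonneg.2 hx.le)]
    ring
  rw [hR, smul_eq_mul]
  have hinv : x⁻¹ = x ^ (-1:ℝ) := by
    rw [Real.rpow_neg hx.le, Real.rpow_one]
  have hmain : x⁻¹ * (x⁻¹) ^ (-(α + 1)) = x ^ α := by
    rw [hinv, ← Real.rpow_mul hx.le, ← Real.rpow_add hx]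
    congr 1
    ring
  rw [← mul_assoc, hmain]

lemma fbmF_scaling {α : ℝ} (hα₀ : 0 < α) (x : ℝ) :
    ∫ u in Ioi (0:ℝ), fbmF α x u = |x| ^ α * ∫ u in Ioi (0:ℝ), fbmF α 1 u := by
  rcases lt_trichotomy x 0 with hx | hx | hx
  · have hFF : ∀ u : ℝ, fbmF α x u = fbmF α (-x) u := by
      intro u
      rw [fbmF_def, fbmF_def, neg_mul, Real.cos_neg]
    simp_rw [hFF]
    rw [fbmF_scaling_pos (-x) (by linarith), abs_of_neg hx]
  · subst hx
    simp [fbmF_def, Real.zero_rpow (ne_of_gt hα₀)]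
  · rw [fbmF_scaling_pos x hx, abs_of_pos hx]

lemma fbmJ_pos {α : ℝ} (hα₀ : 0 < α) (hα₂ : α < 2) :
    0 < ∫ u in Ioi (0:ℝ), fbmF α 1 u := by
  have hint := fbmF_integrable hα₀ hα₂ 1
  have hsub : Ioc (1:ℝ) 2 ⊆ Ioi (0:ℝ) := fun u hu => lt_trans one_pos hu.1
  have hmono : (∫ u in Ioc (1:ℝ) 2, fbmF α 1 u) ≤ ∫ u in Ioi (0:ℝ), fbmF α 1 u := by
    apply setIntegral_mono_set hint
    · filter_upwards [ae_restrict_mem measurableSet_Ioi] with u hu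
      exact fbmF_nonneg α 1 hu
    · exact Filter.Eventually.of_forall hsub
  have hpos : 0 < ∫ u in Ioc (1:ℝ) 2, fbmF α 1 u := by
    rw [← intervalIntegral.integral_of_le one_le_two]
    apply intervalIntegral.intervalIntegral_pos_of_pos_on
    · rw [intervalIntegrable_iff_integrableOn_Ioc_of_le one_le_two]
      exact hint.mono_set hsub
    · intro u hu
      have hu0 : (0:ℝ) < u := lt_trans one_pos hu.1
      rw [fbmF_def, one_mul]
      apply mul_pos _ (Real.rpow_pos_of_pos hu0 _)
      have hcos : Real.cos u < Real.cos 0 := by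
        apply Real.cos_lt_cos_of_nonneg_of_le_pi le_rfl _ hu0
        have := Real.pi_gt_three
        linarith [hu.2]
      rw [Real.cos_zero] at hcos
      linarith
    · norm_num
  linarith

/-- The kernel `R(t,s) = ½(t^α + s^α - |t-s|^α)` is positive semi-definite on
`[0,∞) × [0,∞)` for every `0 < α < 2`. -/
theorem fbm_covariance_posSemidef (α : ℝ) (hα₀ : 0 < α) (hα₂ : α < 2)
    (n : ℕ) (t : Fin n → ℝ) (ht : ∀ j, 0 ≤ t j) (c : Fin n → ℝ) :
    0 ≤ ∑ j, ∑ k,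
        c j * c k * ((1 / 2) * (t j ^ α + t k ^ α - |t j - t k| ^ α)) := by
  classical
  set J : ℝ := ∫ u in Ioi (0:ℝ), fbmF α 1 u with hJdef
  have hJ : 0 < J := fbmJ_pos hα₀ hα₂
  have hrep : ∀ x : ℝ, |x| ^ α * J = ∫ u in Ioi (0:ℝ), fbmF α x u := fun x =>
    (fbmF_scaling hα₀ x).symm
  have hrep' : ∀ j, t j ^ α * J = ∫ u in Ioi (0:ℝ), fbmF α (t j) u := by
    intro j
    have h := hrep (t j)
    rwa [abs_of_nonneg (ht j)] at h
  have h2J : (0:ℝ) < 2 * J := by linarith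
  rw [← mul_nonneg_iff_of_pos_right h2J]
  have hintF : ∀ x : ℝ, IntegrableOn (fbmF α x) (Ioi (0:ℝ)) := fbmF_integrable hα₀ hα₂
  have hintjk : ∀ j k : Fin n, Integrable
      (fun u => c j * c k * (fbmF α (t j) u + fbmF α (t k) u - fbmF α (t j - t k) u))
      (volume.restrict (Ioi (0:ℝ))) := by
    intro j k
    have h12 : Integrable (fun u => fbmF α (t j) u + fbmF α (t k) u)
        (volume.restrict (Ioi (0:ℝ))) := (hintF (t j)).add (hintF (t k))
    have h123 : Integrable
        (fun u => fbmF α (t j) u + fbmF α (t k) u - fbmF α (t j - t k) u)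
        (volume.restrict (Ioi (0:ℝ))) := h12.sub (hintF (t j - t k))
    exact h123.const_mul _
  have hterm : ∀ j k : Fin n,
      c j * c k * ((1 / 2) * (t j ^ α + t k ^ α - |t j - t k| ^ α)) * (2 * J)
      = ∫ u in Ioi (0:ℝ),
          c j * c k * (fbmF α (t j) u + fbmF α (t k) u - fbmF α (t j - t k) u) := by
    intro j k
    have i1 : Integrable (fun u => c j * c k * fbmF α (t j) u)
        (volume.restrict (Ioi (0:ℝ))) := (hintF (t j)).const_mul _
    have i2 : Integrable (fun u => c j * c k * fbmF α (t k) u)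
        (volume.restrict (Ioi (0:ℝ))) := (hintF (t k)).const_mul _
    have i3 : Integrable (fun u => c j * c k * fbmF α (t j - t k) u)
        (volume.restrict (Ioi (0:ℝ))) := (hintF (t j - t k)).const_mul _
    have i12 : Integrable
        (fun u => c j * c k * fbmF α (t j) u + c j * c k * fbmF α (t k) u)
        (volume.restrict (Ioi (0:ℝ))) := i1.add i2
    have hre : (∫ u in Ioi (0:ℝ),
          c j * c k * (fbmF α (t j) u + fbmF α (t k) u - fbmF α (t j - t k) u))
        = ∫ u in Ioi (0:ℝ),
            (c j * c k * fbmF α (t j) u + c j * c k * fbmF α (t k) u)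
              - c j * c k * fbmF α (t j - t k) u := by
      congr 1; ext u; ring
    rw [hre, integral_sub i12 i3, integral_add i1 i2,
      integral_const_mul, integral_const_mul, integral_const_mul,
      ← hrep' j, ← hrep' k, ← hrep (t j - t k)]
    ring
  calc (∑ j, ∑ k,
        c j * c k * ((1 / 2) * (t j ^ α + t k ^ α - |t j - t k| ^ α))) * (2 * J)
      = ∑ j, ∑ k,
        c j * c k * ((1 / 2) * (t j ^ α + t k ^ α - |t j - t k| ^ α)) * (2 * J) := by
        rw [Finset.sum_mul]; simp_rw [Finset.sum_mul]
    _ = ∑ j, ∑ k, ∫ u in Ioi (0:ℝ),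
          c j * c k * (fbmF α (t j) u + fbmF α (t k) u - fbmF α (t j - t k) u) := by
        simp_rw [hterm]
    _ = ∫ u in Ioi (0:ℝ), ∑ j, ∑ k,
          c j * c k * (fbmF α (t j) u + fbmF α (t k) u - fbmF α (t j - t k) u) := by
        have step1 : ∀ j : Fin n,
            (∑ k, ∫ u in Ioi (0:ℝ),
                c j * c k * (fbmF α (t j) u + fbmF α (t k) u - fbmF α (t j - t k) u))
            = ∫ u in Ioi (0:ℝ), ∑ k,
                c j * c k * (fbmF α (t j) u + fbmF α (t k) u - fbmF α (t j - t k) u) :=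
          fun j => (integral_finset_sum _ (fun k _ => hintjk j k)).symm
        simp_rw [step1]
        exact (integral_finset_sum _
          (fun j _ => integrable_finset_sum _ (fun k _ => hintjk j k))).symm
    _ ≥ 0 := by
        apply setIntegral_nonneg measurableSet_Ioi
        intro u hu
        have expand : ∀ j k : Fin n,
            c j * c k * (fbmF α (t j) u + fbmF α (t k) u - fbmF α (t j - t k) u)
            = (c j * (1 - Real.cos (t j * u))) * (c k * (1 - Real.cos (t k * u)))
                * u ^ (-(α + 1))
              + (c j * Real.sin (t j * u)) * (c k * Real.sin (t k * u))
                * u ^ (-(α + 1)) := by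
          intro j k
          simp only [fbmF_def, sub_mul, Real.cos_sub]
          ring
        have key : (∑ j, ∑ k,
            c j * c k * (fbmF α (t j) u + fbmF α (t k) u - fbmF α (t j - t k) u))
            = ((∑ j, c j * (1 - Real.cos (t j * u))) ^ 2
              + (∑ j, c j * Real.sin (t j * u)) ^ 2) * u ^ (-(α + 1)) := by
          simp_rw [expand]
          rw [sq, sq, Finset.sum_mul_sum, Finset.sum_mul_sum, add_mul,
            Finset.sum_mul, Finset.sum_mul, ← Finset.sum_add_distrib]
          apply Finset.sum_congr rfl
          intro j _
          rw [Finset.sum_mul, Finset.sum_mul, ← Finset.sum_add_distrib]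
        rw [key]
        apply mul_nonneg
        · positivity
        · exact Real.rpow_nonneg (le_of_lt hu) _
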